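/- Let G be a graph with vertex cover X, and let P = (p, v_1, ..., v_{n-3}, q) be an induced path such that the cycle C = (v, p, v_1, ..., v_{n-3}, q) is an odd hole for some vertex v ∉ X adjacent to p and q. Let D ⊆ V(G) \ X be disjoint from V(C), with every vertex of D adjacent to both p and q and to no other constraint, such that for every edge {a,b} of P the number of vertices of D adjacent to both a and b (i.e., seeing that edge) is even, and |D| is odd. Then some vertex u ∈ D sees an even number of edges of P, and hence G[V(P) ∪ {u}] contains an odd hole. -/

import Mathlib

open Finset
open scoped Classical

/-- `X` is a vertex cover of `G`: every edge has an endpoint in `X`. -/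
def IsVertexCover {V : Type*} (G : SimpleGraph V) (X : Finset V) : Prop :=
  ∀ ⦃a b : V⦄, G.Adj a b → a ∈ X ∨ b ∈ X

/-- `w : Fin m → V` is an induced path in `G`. -/
def IsInducedPathOn {V : Type*} (G : SimpleGraph V) {m : ℕ} (w : Fin m → V) : Prop :=
  Function.Injective w ∧
    ∀ i j : Fin m, G.Adj (w i) (w j) ↔ (i.val + 1 = j.val ∨ j.val + 1 = i.val)

/-- `f : Fin m → V` is an induced cycle in `G`. -/
def IsInducedCycleOn {V : Type*} (G : SimpleGraph V) {m : ℕ} (f : Fin m → V) : Prop :=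
  Function.Injective f ∧
    ∀ i j : Fin m, G.Adj (f i) (f j) ↔
      ((i.val + 1) % m = j.val ∨ (j.val + 1) % m = i.val)

/-- The induced subgraph of `G` on `S` contains an odd hole. -/
def HasOddHoleOn {V : Type*} (G : SimpleGraph V) (S : Set V) : Prop :=
  ∃ m : ℕ, 5 ≤ m ∧ Odd m ∧ ∃ f : Fin m → V, (∀ i, f i ∈ S) ∧ IsInducedCycleOn G f

/-- Key lemma: if `u` is adjacent to both endpoints of an induced path on an even
number (at least 4) of vertices and sees an even number of edges of the path, then
the path together with `u` contains an odd hole. -/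
lemma key_lemma {V : Type*} (G : SimpleGraph V)
    {m : ℕ} (hm : 4 ≤ m) (hmeven : Even m)
    (w : Fin m → V) (hpath : IsInducedPathOn G w)
    (u : V) (huP : u ∉ Set.range w)
    (hu1 : G.Adj u (w ⟨0, by have _h := hm; omega⟩)) (hu2 : G.Adj u (w ⟨m - 1, by have _h := hm; omega⟩))
    (hEven : Even ((Finset.univ.filter (fun i : Fin (m - 1) =>
        G.Adj u (w ⟨i.val, by have _h := hm; omega⟩) ∧ G.Adj u (w ⟨i.val + 1, by have _h := hm; omega⟩))).card)) :
    HasOddHoleOn G (Set.range w ∪ {u}) := by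
  classical
  set A : ℕ → Prop := fun t => ∃ h : t < m, G.Adj u (w ⟨t, h⟩) with hA
  have hA0 : A 0 := ⟨by omega, hu1⟩
  have hAm : A (m - 1) := ⟨by omega, hu2⟩
  have hadjA : ∀ (t : ℕ) (ht : t < m), G.Adj u (w ⟨t, ht⟩) ↔ A t := by
    intro t ht
    constructor
    · intro h; exact ⟨ht, h⟩
    · rintro ⟨ht', h⟩; exact h
  -- main combinatorial claim: there is a gap of odd length ≥ 3 between consecutive
  -- neighbours of u on the path.
  have hgap : ∃ i j : ℕ, i < j ∧ j < m ∧ A i ∧ A j ∧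
      (∀ t, i < t → t < j → ¬ A t) ∧ Odd (j - i) ∧ 3 ≤ j - i := by
    by_contra hcon
    push_neg at hcon
    have hcon' : ∀ i j, i < j → j < m → A i → A j →
        (∀ t, i < t → t < j → ¬ A t) → j - i = 1 ∨ Even (j - i) := by
      intro i j h1 h2 h3 h4 h5
      rcases Nat.even_or_odd (j - i) with he | ho
      · exact Or.inr he
      · left
        have h6 := hcon i j h1 h2 h3 h4 h5 ho
        have ho' := Nat.odd_iff.1 ho
        omega
    set cnt : ℕ → ℕ := fun t => ((Finset.range t).filter (fun i => A i ∧ A (i + 1))).card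
      with hcnt
    have claim : ∀ t, A t → Even (t + cnt t) := by
      intro t
      induction t using Nat.strong_induction_on with
      | _ t IH =>
        intro hAt
        rcases Nat.eq_zero_or_pos t with rfl | hpos
        · simp [hcnt]
        · have hne : ((Finset.range t).filter A).Nonempty :=
            ⟨0, by simp only [Finset.mem_filter, Finset.mem_range]; exact ⟨hpos, hA0⟩⟩
          set s := ((Finset.range t).filter A).max' hne with hs
          have hsmem : s ∈ (Finset.range t).filter A := Finset.max'_mem _ hne
          have hst : s < t := Finset.mem_range.1 (Finset.mem_filter.1 hsmem).1
          have hAs : A s := (Finset.mem_filter.1 hsmem).2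
          have hmax : ∀ k, s < k → k < t → ¬ A k := by
            intro k hk1 hk2 hAk
            have := Finset.le_max' _ k (Finset.mem_filter.2 ⟨Finset.mem_range.2 hk2, hAk⟩)
            omega
          have htm : t < m := hAt.choose
          have hgor := hcon' s t hst htm hAs hAt hmax
          have hset : (Finset.range t).filter (fun i => A i ∧ A (i + 1))
              = if t - s = 1 then insert s ((Finset.range s).filter (fun i => A i ∧ A (i + 1)))
                else (Finset.range s).filter (fun i => A i ∧ A (i + 1)) := by
            split_ifs with hg
            · ext k
              simp only [Finset.mem_insert, Finset.mem_filter, Finset.mem_range]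
              constructor
              · rintro ⟨hk, hAk, hAk1⟩
                by_cases hks : k < s
                · exact Or.inr ⟨hks, hAk, hAk1⟩
                · left; omega
              · rintro (rfl | ⟨hk, h2⟩)
                · refine ⟨by omega, hAs, ?_⟩
                  have hkt : s + 1 = t := by omega
                  rw [hkt]; exact hAt
                · exact ⟨by omega, h2⟩
            · ext k
              simp only [Finset.mem_filter, Finset.mem_range]
              constructor
              · rintro ⟨hk, hAk, hAk1⟩
                refine ⟨?_, hAk, hAk1⟩
                by_contra hks
                push_neg at hks
                have hks' : k = s := by
                  rcases Nat.lt_or_ge s k with h | h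
                  · exact absurd hAk (hmax k h hk)
                  · omega
                rcases Nat.lt_or_ge (k + 1) t with h | h
                · exact hmax (k + 1) (by omega) h hAk1
                · exact hg (by omega)
              · rintro ⟨hk, h2⟩; exact ⟨by omega, h2⟩
          have hnotmem : s ∉ (Finset.range s).filter (fun i => A i ∧ A (i + 1)) := by simp
          have hIH := IH s hst hAs
          rcases hgor with hg | hg
          · have hct : cnt t = cnt s + 1 := by
              simp only [hcnt]
              rw [hset, if_pos hg, Finset.card_insert_of_notMem hnotmem]
            rw [Nat.even_iff] at hIH ⊢
            omega
          · have hg' := Nat.even_iff.1 hg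
            have hct : cnt t = cnt s := by
              simp only [hcnt]
              rw [hset, if_neg (by omega)]
            rw [Nat.even_iff] at hIH ⊢
            omega
    have hEvm := claim (m - 1) hAm
    -- the total number of seen edges equals the Fin-indexed count, which is even
    have hcards : ((Finset.univ.filter (fun i : Fin (m - 1) =>
        G.Adj u (w ⟨i.val, by omega⟩) ∧ G.Adj u (w ⟨i.val + 1, by omega⟩))).card)
        = cnt (m - 1) := by
      simp only [hcnt]
      apply Finset.card_nbij (fun a : Fin (m - 1) => (a : ℕ))
      · intro a ha
        simp only [Finset.mem_coe, Finset.mem_filter, Finset.mem_univ, true_and] at ha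
        simp only [Finset.mem_coe, Finset.mem_filter, Finset.mem_range]
        have h1 : (a : ℕ) < m - 1 := a.isLt
        exact ⟨h1, ⟨by omega, ha.1⟩, ⟨by omega, ha.2⟩⟩
      · intro a _ b _ hab
        exact Fin.ext hab
      · intro k hk
        simp only [Finset.coe_filter, Set.mem_setOf_eq, Finset.mem_range] at hk
        obtain ⟨hk1, ⟨h2, h3⟩, ⟨h4, h5⟩⟩ := hk
        refine ⟨⟨k, hk1⟩, ?_, rfl⟩
        simp only [Finset.coe_filter, Set.mem_setOf_eq, Finset.mem_univ, true_and]
        exact ⟨h3, h5⟩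
    rw [hcards] at hEven
    rw [Nat.even_iff] at hEven hEvm hmeven
    omega
  obtain ⟨i, j, hij, hjm, hAi, hAj, hbet, hodd, h3⟩ := hgap
  set g : ℕ := j - i with hg
  have hji : j = i + g := by omega
  have hoddg : g % 2 = 1 := Nat.odd_iff.1 hodd
  -- characterize neighbours of u in [i, j]
  have hAchar : ∀ k, i ≤ k → k ≤ j → (A k ↔ k = i ∨ k = j) := by
    intro k h1 h2
    constructor
    · intro hAk
      by_contra hne
      push_neg at hne
      exact hbet k (by omega) (by omega) hAk
    · rintro (rfl | rfl)
      · exact hAi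
      · exact hAj
  have hmod : ∀ a : ℕ, a < g + 2 → (a + 1) % (g + 2) = if a + 1 = g + 2 then 0 else a + 1 := by
    intro a ha
    split_ifs with h
    · rw [h, Nat.mod_self]
    · exact Nat.mod_eq_of_lt (by omega)
  refine ⟨g + 2, by omega, by rw [Nat.odd_iff]; omega,
    fun t => if h : (t : ℕ) = 0 then u else w ⟨i + (t : ℕ) - 1, by have := t.isLt; omega⟩,
    ?_, ?_, ?_⟩
  · intro t
    by_cases h : (t : ℕ) = 0
    · simp only [dif_pos h]; exact Or.inr rfl
    · simp only [dif_neg h]; exact Or.inl ⟨_, rfl⟩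
  · intro t1 t2 heq
    by_cases h1 : (t1 : ℕ) = 0 <;> by_cases h2 : (t2 : ℕ) = 0
    · exact Fin.ext (by omega)
    · simp only [dif_pos h1, dif_neg h2] at heq
      exact absurd ⟨_, heq.symm⟩ huP
    · simp only [dif_neg h1, dif_pos h2] at heq
      exact absurd ⟨_, heq⟩ huP
    · simp only [dif_neg h1, dif_neg h2] at heq
      have := hpath.1 heq
      have hv : i + (t1 : ℕ) - 1 = i + (t2 : ℕ) - 1 := congrArg Fin.val this
      exact Fin.ext (by omega)
  · intro t1 t2
    have ht1 := t1.isLt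
    have ht2 := t2.isLt
    by_cases h1 : (t1 : ℕ) = 0 <;> by_cases h2 : (t2 : ℕ) = 0
    · simp only [dif_pos h1, dif_pos h2]
      rw [hmod _ (by omega), hmod _ (by omega)]
      simp only [SimpleGraph.irrefl, false_iff]
      split_ifs <;> omega
    · simp only [dif_pos h1, dif_neg h2]
      rw [hadjA (i + (t2 : ℕ) - 1) (by omega), hAchar (i + (t2 : ℕ) - 1) (by omega) (by omega),
        hmod _ (by omega), hmod _ (by omega)]
      split_ifs <;> omega
    · simp only [dif_neg h1, dif_pos h2]
      rw [G.adj_comm]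
      rw [hadjA (i + (t1 : ℕ) - 1) (by omega), hAchar (i + (t1 : ℕ) - 1) (by omega) (by omega),
        hmod _ (by omega), hmod _ (by omega)]
      split_ifs <;> omega
    · simp only [dif_neg h1, dif_neg h2]
      rw [hpath.2]
      simp only []
      rw [hmod _ (by omega), hmod _ (by omega)]
      split_ifs <;> omega

theorem stmt15 {V : Type*} (G : SimpleGraph V) (X : Finset V) (hX : IsVertexCover G X)
    {m : ℕ} (hm : 4 ≤ m) (hmeven : Even m)
    (w : Fin m → V) (hpath : IsInducedPathOn G w)
    (v : V) (hvX : v ∉ X) (hvP : v ∉ Set.range w)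
    (hv1 : G.Adj v (w ⟨0, by omega⟩)) (hv2 : G.Adj v (w ⟨m - 1, by omega⟩))
    (hvint : ∀ i : Fin m, i.val ≠ 0 → i.val ≠ m - 1 → ¬ G.Adj v (w i))
    (D : Finset V) (hDX : ∀ d ∈ D, d ∉ X) (hDP : ∀ d ∈ D, d ∉ Set.range w) (hvD : v ∉ D)
    (hDends : ∀ d ∈ D, G.Adj d (w ⟨0, by omega⟩) ∧ G.Adj d (w ⟨m - 1, by omega⟩))
    (hedges : ∀ i : Fin (m - 1), Even ((D.filter (fun d =>
      G.Adj d (w ⟨i.val, by omega⟩) ∧ G.Adj d (w ⟨i.val + 1, by omega⟩))).card))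
    (hDodd : Odd D.card) :
    ∃ u ∈ D, Even ((Finset.univ.filter (fun i : Fin (m - 1) =>
        G.Adj u (w ⟨i.val, by omega⟩) ∧ G.Adj u (w ⟨i.val + 1, by omega⟩))).card) ∧
      HasOddHoleOn G (Set.range w ∪ {u}) := by
  classical
  set c : V → ℕ := fun d => ((Finset.univ.filter (fun i : Fin (m - 1) =>
      G.Adj d (w ⟨i.val, by omega⟩) ∧ G.Adj d (w ⟨i.val + 1, by omega⟩))).card) with hc
  have hswap : ∑ d ∈ D, c d = ∑ i : Fin (m - 1), ((D.filter (fun d =>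
      G.Adj d (w ⟨i.val, by omega⟩) ∧ G.Adj d (w ⟨i.val + 1, by omega⟩))).card) := by
    calc ∑ d ∈ D, c d
        = ∑ d ∈ D, ∑ i : Fin (m - 1), if G.Adj d (w ⟨i.val, by omega⟩) ∧
            G.Adj d (w ⟨i.val + 1, by omega⟩) then 1 else 0 := by
          refine Finset.sum_congr rfl fun d _ => ?_
          exact Finset.card_filter _ _
      _ = ∑ i : Fin (m - 1), ∑ d ∈ D, if G.Adj d (w ⟨i.val, by omega⟩) ∧
            G.Adj d (w ⟨i.val + 1, by omega⟩) then 1 else 0 := Finset.sum_comm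
      _ = _ := by
          refine Finset.sum_congr rfl fun i _ => ?_
          exact (Finset.card_filter _ _).symm
  have hsum_even : (∑ d ∈ D, c d) % 2 = 0 := by
    rw [hswap, Finset.sum_nat_mod]
    have h1 : ∀ i ∈ (Finset.univ : Finset (Fin (m - 1))), ((D.filter (fun d =>
        G.Adj d (w ⟨i.val, by omega⟩) ∧ G.Adj d (w ⟨i.val + 1, by omega⟩))).card) % 2 = 0 :=
      fun i _ => Nat.even_iff.1 (hedges i)
    rw [Finset.sum_congr rfl h1]
    simp
  have hU : ∃ u ∈ D, Even (c u) := by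
    by_contra hno
    push_neg at hno
    have h1 : ∀ d ∈ D, c d % 2 = 1 := fun d hd =>
      Nat.odd_iff.1 (Nat.not_even_iff_odd.1 (hno d hd))
    have hcard := Nat.odd_iff.1 hDodd
    have : (∑ d ∈ D, c d) % 2 = 1 := by
      rw [Finset.sum_nat_mod, Finset.sum_congr rfl h1, Finset.sum_const, smul_eq_mul, mul_one]
      omega
    omega
  obtain ⟨u, huD, huEven⟩ := hU
  refine ⟨u, huD, huEven, ?_⟩
  exact key_lemma G hm hmeven w hpath u (hDP u huD) (hDends u huD).1 (hDends u huD).2 huEven
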